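/- Suppose there exist vertices k and m such that i reaches k under u, c k m holds (k competes with m), and m reaches j under u (i.e., the set S⁻_{i,j} of the paper is nonempty). Then Assumption 1 fails for the augmented relation u': there exist vertices x and y with c x y such that y strictly reaches x under u'. Concretely, m strictly reaches its competitor k under u'. -/

import Mathlib

/-- If `S⁻_{i,j} ≠ ∅`, i.e. there are `k`, `m` with `i` reaching `k` under
`u`, `c k m`, and `m` reaching `j` under `u`, then adding the edge `(j, i)`
violates Assumption 1: some FL-PT strictly reaches its competitor under the
augmented relation — concretely, `m` strictly reaches its competitor `k`. -/
theorem nonempty_Sminus_violates_assumption1 {V : Type*}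
    (u c : V → V → Prop) (j i k m : V)
    (hik : Relation.ReflTransGen u i k)
    (hkm : c k m)
    (hmj : Relation.ReflTransGen u m j) :
    (∃ x y : V, c x y ∧
        Relation.TransGen (fun a b => u a b ∨ (a = j ∧ b = i)) y x) ∧
      Relation.TransGen (fun a b => u a b ∨ (a = j ∧ b = i)) m k := by
  have hmj' : Relation.ReflTransGen (fun a b => u a b ∨ (a = j ∧ b = i)) m j :=
    Relation.ReflTransGen.mono (fun a b h => Or.inl h) m j hmj
  have hik' : Relation.ReflTransGen (fun a b => u a b ∨ (a = j ∧ b = i)) i k :=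
    Relation.ReflTransGen.mono (fun a b h => Or.inl h) i k hik
  have hji : Relation.TransGen (fun a b => u a b ∨ (a = j ∧ b = i)) j i :=
    Relation.TransGen.single (Or.inr ⟨rfl, rfl⟩)
  have hmk : Relation.TransGen (fun a b => u a b ∨ (a = j ∧ b = i)) m k :=
    (Relation.TransGen.trans_right hmj' hji).trans_left hik'
  exact ⟨⟨k, m, hkm, hmk⟩, hmk⟩
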